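/- For a Banach space X, Sz(X) = 1 if and only if X is finite dimensional. -/

import Mathlib

set_option synthInstance.maxHeartbeats 1000000
set_option maxHeartbeats 1000000

noncomputable section

open Ordinal Set Metric

/-- The compact ordinal interval `[0, α]`. -/
instance ordIicCompact (α : Ordinal) : CompactSpace (Set.Iic α) := by
  rw [← isCompact_iff_compactSpace, ← Set.Icc_bot]
  exact isCompact_Icc

/-- `C₀([0, α])`: continuous functions on `[0, α]` vanishing at `α`, as a submodule. -/
def CzeroSub (α : Ordinal) : Submodule ℝ C(Set.Iic α, ℝ) where
  carrier := {f | f ⟨α, Set.self_mem_Iic⟩ = 0}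
  add_mem' := by intro f g hf hg; simp only [Set.mem_setOf_eq] at *; simp [hf, hg]
  zero_mem' := rfl
  smul_mem' := by intro c f hf; simp only [Set.mem_setOf_eq] at *; simp [hf]

/-- The Banach space `C₀([0, α])`. -/
abbrev Czero (α : Ordinal) := ↥(CzeroSub α)

/-- `c₀(S, X)` as a submodule of `ℓ∞(S, X)`. -/
def czeroSub (S : Type*) (X : Type*) [NormedAddCommGroup X] [NormedSpace ℝ X] :
    Submodule ℝ (lp (fun _ : S => X) ⊤) where
  carrier := {f | ∀ ε : ℝ, 0 < ε → {s : S | ε < ‖(f : ∀ _ : S, X) s‖}.Finite}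
  add_mem' := by
    intro f g hf hg ε hε
    refine ((hf (ε/2) (by linarith)).union (hg (ε/2) (by linarith))).subset ?_
    intro s hs
    simp only [Set.mem_setOf_eq, Set.mem_union] at *
    by_contra hc
    push_neg at hc
    have := norm_add_le ((f : ∀ _ : S, X) s) ((g : ∀ _ : S, X) s)
    simp only [lp.coeFn_add, Pi.add_apply] at hs
    linarith [hc.1, hc.2]
  zero_mem' := by
    intro ε hε
    convert Set.finite_empty
    ext s; simp [hε.not_gt, le_of_lt hε]
  smul_mem' := by
    intro c f hf ε hε
    rcases eq_or_ne c 0 with rfl | hc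
    · convert Set.finite_empty
      ext s; simp [hε.not_gt, le_of_lt hε]
    · refine (hf (ε / ‖c‖) (div_pos hε (norm_pos_iff.2 hc))).subset ?_
      intro s hs
      simp only [Set.mem_setOf_eq, lp.coeFn_smul, Pi.smul_apply, norm_smul] at *
      exact (div_lt_iff₀ (norm_pos_iff.2 hc)).2 (by rw [mul_comm]; exact hs)

/-- The Banach space `c₀(S, X)`. -/
abbrev czero (S : Type*) (X : Type*) [NormedAddCommGroup X] [NormedSpace ℝ X] :=
  ↥(czeroSub S X)

instance (α : Ordinal) : NormedAddCommGroup (Czero α) := inferInstance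
instance (α : Ordinal) : NormedSpace ℝ (Czero α) := inferInstance
instance (S : Type*) (X : Type*) [NormedAddCommGroup X] [NormedSpace ℝ X] :
    NormedAddCommGroup (czero S X) := inferInstance
instance (S : Type*) (X : Type*) [NormedAddCommGroup X] [NormedSpace ℝ X] :
    NormedSpace ℝ (czero S X) := inferInstance

section Szlenk

variable (X : Type*) [NormedAddCommGroup X] [NormedSpace ℝ X]

open NormedSpace

/-- A set of functionals is weak-star open if it is open in the weak-star topology. -/
def IsWstarOpen (V : Set (StrongDual ℝ X)) : Prop :=
  IsOpen (StrongDual.toWeakDual '' V : Set (WeakDual ℝ X))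

/-- The ε-Szlenk derivation. -/
def szDeriv (ε : ℝ) (B : Set (StrongDual ℝ X)) : Set (StrongDual ℝ X) :=
  {x ∈ B | ∀ V : Set (StrongDual ℝ X), IsWstarOpen X V → x ∈ V → ε < Metric.diam (B ∩ V)}

/-- Transfinite iterates of the ε-Szlenk derivation. -/
def szIter (ε : ℝ) (B : Set (StrongDual ℝ X)) (β : Ordinal.{0}) : Set (StrongDual ℝ X) :=
  Ordinal.limitRecOn β B (fun _ ih => szDeriv X ε ih)
    (fun β _ ih => ⋂ (σ : Ordinal.{0}) (h : σ < β), ih σ h)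

/-- The ε-Szlenk index `Sz(X, ε)`. -/
def SzE (ε : ℝ) : Ordinal :=
  sInf {β | szIter X ε (Metric.closedBall (0 : StrongDual ℝ X) 1) β = ∅}

/-- `X` has a (well-defined) Szlenk index. -/
def SzDefined : Prop :=
  ∀ ε : ℝ, 0 < ε → ∃ β : Ordinal, szIter X ε (Metric.closedBall (0 : StrongDual ℝ X) 1) β = ∅

/-- The Szlenk index `Sz(X)`. -/
def Sz : Ordinal := ⨆ ε : {ε : ℝ // 0 < ε}, SzE X ε

/-- A weak-star slice. -/
def wstarSlice (x : X) (t : ℝ) : Set (StrongDual ℝ X) := {x' | t < x' x}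

/-- The ε-dentability derivation. -/
def dzDeriv (ε : ℝ) (B : Set (StrongDual ℝ X)) : Set (StrongDual ℝ X) :=
  {x' ∈ B | ∀ (x : X) (t : ℝ), x' ∈ wstarSlice X x t → ε < Metric.diam (B ∩ wstarSlice X x t)}

/-- Transfinite iterates of the ε-dentability derivation. -/
def dzIter (ε : ℝ) (B : Set (StrongDual ℝ X)) (β : Ordinal.{0}) : Set (StrongDual ℝ X) :=
  Ordinal.limitRecOn β B (fun _ ih => dzDeriv X ε ih)
    (fun β _ ih => ⋂ (σ : Ordinal.{0}) (h : σ < β), ih σ h)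

/-- The ε-w*-dentability index `Dz(X, ε)`. -/
def DzE (ε : ℝ) : Ordinal :=
  sInf {β | dzIter X ε (Metric.closedBall (0 : StrongDual ℝ X) 1) β = ∅}

/-- The w*-dentability index `Dz(X)`. -/
def Dz : Ordinal := ⨆ ε : {ε : ℝ // 0 < ε}, DzE X ε

end Szlenk



section AuxProofs

open NormedSpace Topology Filter

variable {X : Type*} [NormedAddCommGroup X] [NormedSpace ℝ X]

lemma szIter_zero' (ε : ℝ) (B : Set (StrongDual ℝ X)) : szIter X ε B 0 = B := by
  unfold szIter
  exact Ordinal.limitRecOn_zero _ _ _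

lemma szIter_one' (ε : ℝ) (B : Set (StrongDual ℝ X)) : szIter X ε B 1 = szDeriv X ε B := by
  unfold szIter
  rw [show (1 : Ordinal) = Order.succ 0 from (Ordinal.succ_zero).symm,
    Ordinal.limitRecOn_succ, Ordinal.limitRecOn_zero]

lemma isWstarOpen_of_isOpen' [CompleteSpace X] [FiniteDimensional ℝ X] {V : Set (StrongDual ℝ X)}
    (hV : IsOpen V) : IsWstarOpen X V := by
  haveI : FiniteDimensional ℝ (WeakDual ℝ X) :=
    (inferInstance : FiniteDimensional ℝ (StrongDual ℝ X))
  have hc : Continuous ((StrongDual.toWeakDual.symm : WeakDual ℝ X ≃ₗ[ℝ] StrongDual ℝ X) :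
      WeakDual ℝ X →ₗ[ℝ] StrongDual ℝ X) :=
    LinearMap.continuous_of_finiteDimensional _
  have himg : StrongDual.toWeakDual '' V =
      ((StrongDual.toWeakDual.symm : WeakDual ℝ X ≃ₗ[ℝ] StrongDual ℝ X) :
        WeakDual ℝ X →ₗ[ℝ] StrongDual ℝ X) ⁻¹' V := by
    ext g
    constructor
    · rintro ⟨v, hv, rfl⟩
      simpa using hv
    · intro hg
      exact ⟨StrongDual.toWeakDual.symm g, hg, by simp⟩
  rw [IsWstarOpen, himg]
  exact hV.preimage hc

lemma szDeriv_empty' [CompleteSpace X] [FiniteDimensional ℝ X] {ε : ℝ} (hε : 0 < ε)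
    (B : Set (StrongDual ℝ X)) : szDeriv X ε B = ∅ := by
  ext x
  simp only [szDeriv, Set.mem_setOf_eq, Set.mem_empty_iff_false, iff_false, not_and]
  intro hxB h
  have hmem : x ∈ Metric.ball x (ε / 3) := Metric.mem_ball_self (by linarith)
  have h1 := h (Metric.ball x (ε / 3)) (isWstarOpen_of_isOpen' Metric.isOpen_ball) hmem
  have h2 : Metric.diam (B ∩ Metric.ball x (ε / 3)) ≤ 2 * (ε / 3) := by
    refine le_trans (Metric.diam_mono Set.inter_subset_right Metric.isBounded_ball) ?_
    exact Metric.diam_ball (by linarith)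
  linarith

lemma exists_unit_functional' (h : ¬ FiniteDimensional ℝ X) {s : Set X} (hs : s.Finite) :
    ∃ f : StrongDual ℝ X, ‖f‖ = 1 ∧ ∀ x ∈ s, f x = 0 := by
  classical
  set M : Submodule ℝ X := Submodule.span ℝ s with hM
  haveI : FiniteDimensional ℝ M := FiniteDimensional.span_of_finite ℝ hs
  have hMc : IsClosed (M : Set X) := M.closed_of_finiteDimensional
  have hMne : M ≠ ⊤ := by
    intro hM2
    apply h
    have ht : FiniteDimensional ℝ (⊤ : Submodule ℝ X) := hM2 ▸ inferInstance
    exact (Submodule.topEquiv : (⊤ : Submodule ℝ X) ≃ₗ[ℝ] X).finiteDimensional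
  obtain ⟨x₀, hx₀⟩ : ∃ x₀, x₀ ∉ M := by
    by_contra hc
    push_neg at hc
    exact hMne (Submodule.eq_top_iff'.mpr hc)
  obtain ⟨f, u, hfa, hfx⟩ :=
    geometric_hahn_banach_closed_point (M.convex) hMc hx₀
  have hu : 0 < u := by simpa using hfa 0 M.zero_mem
  have hfM : ∀ m ∈ M, f m = 0 := by
    intro m hm
    by_contra hfm
    have hc : ∀ c : ℝ, c * f m < u := by
      intro c
      simpa using hfa (c • m) (M.smul_mem c hm)
    have := hc ((u + 1) / f m)
    rw [div_mul_cancel₀ _ hfm] at this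
    linarith
  have hf0 : f ≠ 0 := by
    intro hf
    rw [hf] at hfx
    simp only [ContinuousLinearMap.zero_apply] at hfx
    linarith
  have hfn : ‖f‖ ≠ 0 := by simpa using hf0
  refine ⟨‖f‖⁻¹ • f, ?_, ?_⟩
  · rw [norm_smul, norm_inv, norm_norm, inv_mul_cancel₀ hfn]
  · intro x hx
    have : f x = 0 := hfM x (Submodule.subset_span hx)
    simp [this]

lemma zero_mem_szDeriv' (h : ¬ FiniteDimensional ℝ X) {ε : ℝ} (hε : ε < 1) :
    (0 : StrongDual ℝ X) ∈ szDeriv X ε (Metric.closedBall 0 1) := by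
  refine ⟨Metric.mem_closedBall_self zero_le_one, ?_⟩
  intro V hV h0V
  have hW : StrongDual.toWeakDual '' V ∈ 𝓝 (StrongDual.toWeakDual (0 : StrongDual ℝ X)) :=
    hV.mem_nhds ⟨0, h0V, rfl⟩
  rw [(Topology.IsInducing.mk rfl : Topology.IsInducing (fun (x : WeakDual ℝ X) (y : X) => topDualPairing ℝ X x y)).nhds_eq_comap] at hW
  obtain ⟨U, hU, hUW⟩ := Filter.mem_comap.mp hW
  have hU0 : U ∈ 𝓝 (fun _ : X => (0 : ℝ)) := by
    have h00 : (fun y => ((topDualPairing ℝ X) (StrongDual.toWeakDual (0 : StrongDual ℝ X))) y)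
        = fun _ : X => (0 : ℝ) := by
      ext y
      simp; rfl
    rwa [h00] at hU
  rw [nhds_pi, Filter.mem_pi] at hU0
  obtain ⟨I, hIfin, t, ht, hIt⟩ := hU0
  obtain ⟨f, hfn, hfI⟩ := exists_unit_functional' h hIfin
  have hfU : (fun y => topDualPairing ℝ X (StrongDual.toWeakDual f) y) ∈ U := by
    apply hIt
    intro x hx
    have hfx0 : f x = 0 := hfI x hx
    show ((topDualPairing ℝ X) (StrongDual.toWeakDual f)) x ∈ t x
    have heq : ((topDualPairing ℝ X) (StrongDual.toWeakDual f)) x = f x := rfl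
    rw [heq, hfx0]
    exact mem_of_mem_nhds (ht x)
  have hfV : f ∈ V := by
    have : StrongDual.toWeakDual f ∈ StrongDual.toWeakDual '' V := hUW hfU
    obtain ⟨v, hv, hve⟩ := this
    have hvf : v = f := StrongDual.toWeakDual.injective hve
    exact hvf ▸ hv
  have hbdd : Bornology.IsBounded (Metric.closedBall (0 : StrongDual ℝ X) 1 ∩ V) :=
    Metric.isBounded_closedBall.subset Set.inter_subset_left
  have hd : dist f (0 : StrongDual ℝ X) ≤ Metric.diam (Metric.closedBall (0 : StrongDual ℝ X) 1 ∩ V) :=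
    Metric.dist_le_diam_of_mem hbdd
      ⟨Metric.mem_closedBall.mpr (by simp [hfn]), hfV⟩
      ⟨Metric.mem_closedBall_self zero_le_one, h0V⟩
  rw [dist_zero_right, hfn] at hd
  linarith

end AuxProofs

open NormedSpace

theorem statement10 (X : Type*) [NormedAddCommGroup X] [NormedSpace ℝ X] [CompleteSpace X] :
    (SzDefined X ∧ Sz X = 1) ↔ FiniteDimensional ℝ X := by
  constructor
  · rintro ⟨hdef, hsz⟩
    by_contra h
    have h0 : (0 : StrongDual ℝ X) ∈ szIter X (1/2) (Metric.closedBall 0 1) 0 := by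
      rw [szIter_zero']; exact Metric.mem_closedBall_self zero_le_one
    have h2 : (0 : StrongDual ℝ X) ∈ szIter X (1/2) (Metric.closedBall 0 1) 1 := by
      rw [szIter_one']; exact zero_mem_szDeriv' h (by norm_num)
    have hne := hdef (1/2) (by norm_num)
    have hmem : szIter X (1/2) (Metric.closedBall 0 1) (SzE X (1/2)) = ∅ := by
      have hne' : Set.Nonempty
          {β : Ordinal | szIter X (1/2) (Metric.closedBall (0 : StrongDual ℝ X) 1) β = ∅} := hne
      exact csInf_mem hne'
    have hle : SzE X (1/2) ≤ 1 := by
      rw [← hsz]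
      exact le_ciSup (Ordinal.bddAbove_range _) (⟨1/2, by norm_num⟩ : {ε : ℝ // 0 < ε})
    rcases Ordinal.le_one_iff.mp hle with h' | h'
    · rw [h'] at hmem; rw [hmem] at h0; exact h0
    · rw [h'] at hmem; rw [hmem] at h2; exact h2
  · intro hfd
    have hone : ∀ ε : ℝ, 0 < ε → szIter X ε (Metric.closedBall (0 : StrongDual ℝ X) 1) 1 = ∅ := by
      intro ε hε
      rw [szIter_one']
      exact szDeriv_empty' hε _
    refine ⟨fun ε hε => ⟨1, hone ε hε⟩, ?_⟩
    have hSzE : ∀ ε : {ε : ℝ // 0 < ε}, SzE X (ε : ℝ) = 1 := by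
      rintro ⟨ε, hε⟩
      apply le_antisymm
      · have h1' : (1 : Ordinal) ∈
            {β : Ordinal | szIter X ε (Metric.closedBall (0 : StrongDual ℝ X) 1) β = ∅} := hone ε hε
        exact csInf_le' h1'
      · by_contra hlt
        push_neg at hlt
        have h0 : SzE X ε = 0 := Ordinal.lt_one_iff_zero.mp hlt
        have hmem : szIter X ε (Metric.closedBall 0 1) (SzE X ε) = ∅ := by
          have hne' : Set.Nonempty
              {β : Ordinal | szIter X ε (Metric.closedBall (0 : StrongDual ℝ X) 1) β = ∅} :=
            ⟨1, hone ε hε⟩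
          exact csInf_mem hne'
        rw [h0, szIter_zero'] at hmem
        have : (0 : StrongDual ℝ X) ∈ Metric.closedBall (0 : StrongDual ℝ X) 1 :=
          Metric.mem_closedBall_self zero_le_one
        rw [hmem] at this
        exact this
    haveI : Nonempty {ε : ℝ // 0 < ε} := ⟨⟨1, one_pos⟩⟩
    rw [Sz]
    simp only [hSzE]
    exact ciSup_const
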